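/- Fix k ≥ 1 and consider the one-dimensional probabilistic cellular automaton on cells 0, 1, …, k+1 with fixed boundary values y^t_0 = y^t_{k+1} = 0 for all t, defined as follows: let (u_i^t)_{1≤i≤k, t≥1} be i.i.d. Bernoulli(1/2) random variables, and set y^{t+1}_i = y^t_{i−1} if y^t_{i−1} = y^t_{i+1}, and y^{t+1}_i = u_i^{t+1} otherwise, for 1 ≤ i ≤ k. Then there is a constant c (independent of k and of the initial configuration) such that for every initial configuration y⁰ ∈ {0,1}^{{1,…,k}}, the absorption time T := min{t : y^t_i = 0 for all 1 ≤ i ≤ k} is almost surely finite and E[T] ≤ c·k². -/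

import Mathlib

open MeasureTheory ProbabilityTheory
open scoped ENNReal NNReal

namespace Stmt19

abbrev Coin (k : ℕ) := {p : ℕ × ℕ // 1 ≤ p.1 ∧ p.1 ≤ k ∧ 1 ≤ p.2}

variable {Ω : Type} {k : ℕ}

/-- canonical process started from all ones -/
def proc (u : Coin k → Ω → Bool) : ℕ → Ω → ℕ → Bool
  | 0, _, i => decide (1 ≤ i ∧ i ≤ k)
  | (t+1), ω, i =>
    if h : 1 ≤ i ∧ i ≤ k then
      (if proc u t ω (i-1) = proc u t ω (i+1) then proc u t ω (i-1)
       else u ⟨(i, t+1), h.1, h.2, Nat.le_add_left 1 t⟩ ω)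
    else false

lemma proc_out (u : Coin k → Ω → Bool) (t : ℕ) (ω : Ω) (i : ℕ)
    (hi : ¬ (1 ≤ i ∧ i ≤ k)) : proc u t ω i = false := by
  cases t with
  | zero => simp [proc, hi]
  | succ t => simp [proc, hi]

lemma proc_zero (u : Coin k → Ω → Bool) (t : ℕ) (ω : Ω) : proc u t ω 0 = false :=
  proc_out u t ω 0 (by omega)

lemma proc_top (u : Coin k → Ω → Bool) (t : ℕ) (ω : Ω) : proc u t ω (k+1) = false :=
  proc_out u t ω (k+1) (by omega)

lemma proc_succ_interior (u : Coin k → Ω → Bool) (t : ℕ) (ω : Ω) (i : ℕ)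
    (h1 : 1 ≤ i) (h2 : i ≤ k) :
    proc u (t+1) ω i =
      if proc u t ω (i-1) = proc u t ω (i+1) then proc u t ω (i-1)
      else u ⟨(i, t+1), h1, h2, Nat.le_add_left 1 t⟩ ω := by
  simp [proc, h1, h2]

/-- dead configs stay dead -/
lemma proc_absorb (u : Coin k → Ω → Bool) (t : ℕ) (ω : Ω)
    (h : ∀ i, 1 ≤ i → i ≤ k → proc u t ω i = false) :
    ∀ i, 1 ≤ i → i ≤ k → proc u (t+1) ω i = false := by
  have h0 : ∀ i, i ≤ k + 1 → proc u t ω i = false := by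
    intro i hi
    by_cases hint : 1 ≤ i ∧ i ≤ k
    · exact h i hint.1 hint.2
    · exact proc_out u t ω i hint
  intro i h1 h2
  rw [proc_succ_interior u t ω i h1 h2]
  rw [h0 (i-1) (by omega), h0 (i+1) (by omega)]
  simp

/-- monotone domination of any process satisfying the hypotheses -/
lemma proc_dominates
    (u : Coin k → Ω → Bool) (y : ℕ → Ω → (ℕ → Bool))
    (hbc : ∀ (t : ℕ) (ω : Ω), y t ω 0 = false ∧ y t ω (k + 1) = false)
    (hrec : ∀ (t : ℕ) (ω : Ω) (i : ℕ) (h1 : 1 ≤ i) (h2 : i ≤ k),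
      y (t + 1) ω i =
        if y t ω (i - 1) = y t ω (i + 1) then y t ω (i - 1)
        else u ⟨(i, t + 1), h1, h2, Nat.le_add_left 1 t⟩ ω) :
    ∀ (t : ℕ) (ω : Ω) (i : ℕ), i ≤ k + 1 → y t ω i = true → proc u t ω i = true := by
  intro t
  induction t with
  | zero =>
    intro ω i hi hy
    by_cases hint : 1 ≤ i ∧ i ≤ k
    · simp [proc, hint]
    · exfalso
      have : i = 0 ∨ i = k + 1 := by omega
      rcases this with h | h <;> rw [h] at hy
      · rw [(hbc 0 ω).1] at hy; exact Bool.false_ne_true hy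
      · rw [(hbc 0 ω).2] at hy; exact Bool.false_ne_true hy
  | succ t ih =>
    intro ω i hi hy
    by_cases hint : 1 ≤ i ∧ i ≤ k
    · obtain ⟨h1, h2⟩ := hint
      rw [hrec t ω i h1 h2] at hy
      rw [proc_succ_interior u t ω i h1 h2]
      by_cases hyeq : y t ω (i-1) = y t ω (i+1)
      · rw [if_pos hyeq] at hy
        -- y t ω (i-1) = true and y t ω (i+1) = true
        have hm1 : proc u t ω (i-1) = true := ih ω (i-1) (by omega) hy
        have hp1 : proc u t ω (i+1) = true := ih ω (i+1) (by omega) (hyeq ▸ hy)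
        rw [hm1, hp1]; simp
      · rw [if_neg hyeq] at hy
        by_cases hpeq : proc u t ω (i-1) = proc u t ω (i+1)
        · -- one of the y neighbours is true hence both proc neighbours true
          rw [if_pos hpeq]
          cases hf : y t ω (i-1) with
          | true => exact ih ω (i-1) (by omega) hf
          | false =>
            have hyt : y t ω (i+1) = true := by
              cases hb : y t ω (i+1)
              · exact absurd (by rw [hf, hb]) hyeq
              · rfl
            have := ih ω (i+1) (by omega) hyt
            rw [← hpeq] at this; exact this
        · rw [if_neg hpeq]; exact hy
    · exfalso
      have : i = 0 ∨ i = k + 1 := by omega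
      rcases this with h | h <;> rw [h] at hy
      · rw [(hbc (t+1) ω).1] at hy; exact Bool.false_ne_true hy
      · rw [(hbc (t+1) ω).2] at hy; exact Bool.false_ne_true hy


/-! ### Real-valued functionals -/

noncomputable def ind (b : Bool) : ℝ := if b then 1 else 0

lemma ind_nonneg (b : Bool) : 0 ≤ ind b := by cases b <;> simp [ind]
lemma ind_le_one (b : Bool) : ind b ≤ 1 := by cases b <;> simp [ind]
lemma ind_false : ind false = 0 := rfl
lemma ind_true : ind true = 1 := rfl

/-- number of ones at time t -/
noncomputable def SS (u : Coin k → Ω → Bool) (t : ℕ) (ω : Ω) : ℝ :=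
  ∑ i ∈ Finset.range k, ind (proc u t ω (i+1))

/-- indicator that cell i gets a coin at time t+1 -/
noncomputable def br (u : Coin k → Ω → Bool) (t : ℕ) (ω : Ω) (i : ℕ) : ℝ :=
  if proc u t ω (i-1) = proc u t ω (i+1) then 0 else 1

noncomputable def CC (u : Coin k → Ω → Bool) (t : ℕ) (ω : Ω) : ℝ :=
  ∑ i ∈ Finset.range k, br u t ω (i+1)

noncomputable def dd (u : Coin k → Ω → Bool) (t : ℕ) (ω : Ω) : ℝ :=
  (ind (proc u t ω 1) + ind (proc u t ω k)) / 2

noncomputable def eps (u : Coin k → Ω → Bool) (i t : ℕ) (ω : Ω) : ℝ :=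
  if h : 1 ≤ i ∧ i ≤ k ∧ 1 ≤ t then ind (u ⟨(i,t),h⟩ ω) - 1/2 else 0

noncomputable def RR (u : Coin k → Ω → Bool) (t : ℕ) (ω : Ω) : ℝ :=
  ∑ i ∈ Finset.range k, br u t ω (i+1) * eps u (i+1) (t+1) ω

variable (u : Coin k → Ω → Bool)

lemma br_nonneg (t : ℕ) (ω : Ω) (i : ℕ) : 0 ≤ br u t ω i := by
  unfold br; split <;> norm_num

lemma br_le_one (t : ℕ) (ω : Ω) (i : ℕ) : br u t ω i ≤ 1 := by
  unfold br; split <;> norm_num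

lemma br_sq (t : ℕ) (ω : Ω) (i : ℕ) : br u t ω i * br u t ω i = br u t ω i := by
  unfold br; split <;> norm_num

lemma eps_sq (i t : ℕ) (h : 1 ≤ i ∧ i ≤ k ∧ 1 ≤ t) (ω : Ω) :
    eps u i t ω * eps u i t ω = 1/4 := by
  unfold eps
  rw [dif_pos h]
  cases hb : u ⟨(i,t),h⟩ ω <;> simp [ind, hb] <;> norm_num

lemma SS_nonneg (t : ℕ) (ω : Ω) : 0 ≤ SS u t ω :=
  Finset.sum_nonneg fun i _ => ind_nonneg _

lemma SS_le (t : ℕ) (ω : Ω) : SS u t ω ≤ k := by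
  calc SS u t ω ≤ ∑ _i ∈ Finset.range k, (1:ℝ) :=
        Finset.sum_le_sum fun i _ => ind_le_one _
    _ = k := by simp

lemma CC_nonneg (t : ℕ) (ω : Ω) : 0 ≤ CC u t ω :=
  Finset.sum_nonneg fun i _ => br_nonneg u t ω _

lemma dd_nonneg (t : ℕ) (ω : Ω) : 0 ≤ dd u t ω := by
  unfold dd
  have := ind_nonneg (proc u t ω 1); have := ind_nonneg (proc u t ω k); linarith

lemma SS_ge_one_of_true (t : ℕ) (ω : Ω) (i : ℕ) (h1 : 1 ≤ i) (h2 : i ≤ k)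
    (h : proc u t ω i = true) : 1 ≤ SS u t ω := by
  have hmem : i - 1 ∈ Finset.range k := Finset.mem_range.mpr (by omega)
  have hieq : i - 1 + 1 = i := by omega
  have := Finset.single_le_sum (f := fun j => ind (proc u t ω (j+1)))
    (fun j _ => ind_nonneg _) hmem
  rw [hieq, h, ind_true] at this
  unfold SS
  exact this

lemma dd_le_SS (t : ℕ) (ω : Ω) (hk : 1 ≤ k) : dd u t ω ≤ SS u t ω := by
  unfold dd
  cases h1 : proc u t ω 1 with
  | false =>
    cases hkk : proc u t ω k with
    | false => rw [ind_false]; simpa using SS_nonneg u t ω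
    | true =>
      have := SS_ge_one_of_true u t ω k hk le_rfl hkk
      rw [ind_false, ind_true]
      linarith
  | true =>
    have := SS_ge_one_of_true u t ω 1 le_rfl hk h1
    have := ind_le_one (proc u t ω k)
    have := ind_nonneg (proc u t ω k)
    rw [ind_true]
    linarith

lemma SS_zero (ω : Ω) : SS u 0 ω = k := by
  unfold SS
  have : ∀ i ∈ Finset.range k, ind (proc u 0 ω (i+1)) = 1 := by
    intro i hi
    rw [Finset.mem_range] at hi
    have : proc u 0 ω (i+1) = true := by simp [proc]; omega
    rw [this, ind_true]
  rw [Finset.sum_congr rfl this]; simp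

/-- the exact one-cell identity -/
lemma ind_proc_succ (t : ℕ) (ω : Ω) (i : ℕ) (h1 : 1 ≤ i) (h2 : i ≤ k) :
    ind (proc u (t+1) ω i) =
      (ind (proc u t ω (i-1)) + ind (proc u t ω (i+1)))/2
        + br u t ω i * eps u i (t+1) ω := by
  rw [proc_succ_interior u t ω i h1 h2]
  by_cases heq : proc u t ω (i-1) = proc u t ω (i+1)
  · rw [if_pos heq]
    unfold br; rw [if_pos heq, heq]; ring
  · rw [if_neg heq]
    unfold br; rw [if_neg heq]
    have ht : 1 ≤ i ∧ i ≤ k ∧ 1 ≤ t + 1 := ⟨h1, h2, Nat.le_add_left 1 t⟩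
    unfold eps; rw [dif_pos ht]
    have hsum : ind (proc u t ω (i-1)) + ind (proc u t ω (i+1)) = 1 := by
      cases ha : proc u t ω (i-1) <;> cases hb : proc u t ω (i+1) <;>
        simp_all [ind]
    rw [hsum]; ring

/-- the exact one-step identity S' = S - d + R -/
lemma SS_succ (t : ℕ) (ω : Ω) (hk : 1 ≤ k) :
    SS u (t+1) ω = SS u t ω - dd u t ω + RR u t ω := by
  set f : ℕ → ℝ := fun j => ind (proc u t ω j) with hf
  have hstep : SS u (t+1) ω
      = ∑ i ∈ Finset.range k, ((f i + f (i+2))/2) + RR u t ω := by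
    unfold SS RR
    rw [← Finset.sum_add_distrib]
    apply Finset.sum_congr rfl
    intro i hi
    rw [Finset.mem_range] at hi
    have := ind_proc_succ u t ω (i+1) (by omega) (by omega)
    simpa using this
  rw [hstep]
  have hS : SS u t ω = ∑ i ∈ Finset.range k, f (i+1) := rfl
  obtain ⟨m, rfl⟩ : ∃ m, k = m + 1 := ⟨k - 1, by omega⟩
  have h0 : f 0 = 0 := by simp only [hf]; rw [proc_zero]; rfl
  have htop : f (m+2) = 0 := by simp only [hf]; rw [show m+2 = (m+1)+1 from rfl, proc_top]; rfl
  have hleft : ∑ i ∈ Finset.range (m+1), f i = SS u t ω - f (m+1) := by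
    rw [Finset.sum_range_succ', hS, Finset.sum_range_succ, h0]; ring
  have hright : ∑ i ∈ Finset.range (m+1), f (i+2) = SS u t ω - f 1 := by
    rw [Finset.sum_range_succ, hS, Finset.sum_range_succ']
    rw [show m+1+1 = m+2 from rfl, htop]
    ring_nf
  have hsplit : ∑ i ∈ Finset.range (m+1), (f i + f (i+2))/2
      = ((∑ i ∈ Finset.range (m+1), f i) + ∑ i ∈ Finset.range (m+1), f (i+2))/2 := by
    rw [← Finset.sum_div, Finset.sum_add_distrib]
  rw [hsplit, hleft, hright]
  unfold dd
  simp only [hf]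
  ring


lemma CC_ge_one_of_br (t : ℕ) (ω : Ω) (i : ℕ) (h1 : 1 ≤ i) (h2 : i ≤ k)
    (h : proc u t ω (i-1) ≠ proc u t ω (i+1)) : 1 ≤ CC u t ω := by
  have hmem : i - 1 ∈ Finset.range k := Finset.mem_range.mpr (by omega)
  have := Finset.single_le_sum (f := fun j => br u t ω (j+1))
    (fun j _ => br_nonneg u t ω _) hmem
  rw [show i - 1 + 1 = i by omega] at this
  unfold CC
  refine le_trans ?_ this
  unfold br
  rw [if_neg h]

lemma alive_one_le_CC (hk : 2 ≤ k) (t : ℕ) (ω : Ω)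
    (halive : ∃ i, 1 ≤ i ∧ i ≤ k ∧ proc u t ω i = true) :
    1 ≤ CC u t ω + CC u (t+1) ω := by
  by_cases hC : ∃ i, 1 ≤ i ∧ i ≤ k ∧ proc u t ω (i-1) ≠ proc u t ω (i+1)
  · obtain ⟨i, h1, h2, h3⟩ := hC
    have := CC_ge_one_of_br u t ω i h1 h2 h3
    have := CC_nonneg u (t+1) ω
    linarith
  · push_neg at hC
    have heven : ∀ j, 2*j ≤ k+1 → proc u t ω (2*j) = false := by
      intro j
      induction j with
      | zero => intro _; simpa using proc_zero u t ω
      | succ j ih =>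
        intro h
        have hstep := hC (2*j+1) (by omega) (by omega)
        rw [show 2*j+1-1 = 2*j by omega] at hstep
        rw [show 2*(j+1) = 2*j+1+1 by ring, ← hstep]
        exact ih (by omega)
    have hodd : ∀ j, 2*j+1 ≤ k+1 → proc u t ω (2*j+1) = proc u t ω 1 := by
      intro j
      induction j with
      | zero => intro _; norm_num
      | succ j ih =>
        intro h
        have hstep := hC (2*j+2) (by omega) (by omega)
        rw [show 2*j+2-1 = 2*j+1 by omega] at hstep
        rw [show 2*(j+1)+1 = 2*j+2+1 by ring, ← hstep]
        exact ih (by omega)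
    obtain ⟨i₀, hi1, hi2, hi3⟩ := halive
    have h1true : proc u t ω 1 = true := by
      rcases Nat.even_or_odd i₀ with ⟨j, hj⟩ | ⟨j, hj⟩
      · exfalso
        have := heven j (by omega)
        rw [show 2*j = i₀ by omega] at this
        rw [this] at hi3; exact Bool.false_ne_true hi3
      · have := hodd j (by omega)
        rw [show 2*j+1 = i₀ by omega] at this
        rw [← this]; exact hi3
    have h2true : proc u (t+1) ω 2 = true := by
      rw [proc_succ_interior u t ω 2 (by omega) hk]
      have := hC 2 (by omega) hk
      rw [show (2:ℕ)-1 = 1 from rfl] at this ⊢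
      rw [if_pos this, h1true]
    have hbr : proc u (t+1) ω (1-1) ≠ proc u (t+1) ω (1+1) := by
      rw [show (1:ℕ)-1 = 0 from rfl, proc_zero, show (1:ℕ)+1 = 2 from rfl, h2true]
      simp
    have := CC_ge_one_of_br u (t+1) ω 1 le_rfl (by omega) hbr
    have := CC_nonneg u t ω
    linarith


/-! ### Measure theory -/

section Meas

variable [mΩ : MeasurableSpace Ω]

/-- σ-algebra of coins up to time t -/
def coinSig (u : Coin k → Ω → Bool) (t : ℕ) : MeasurableSpace Ω :=
  ⨆ (p : Coin k) (_ : p.val.2 ≤ t), MeasurableSpace.comap (u p) inferInstance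

lemma comap_le_coinSig {t : ℕ} (p : Coin k) (h : p.val.2 ≤ t) :
    MeasurableSpace.comap (u p) inferInstance ≤ coinSig u t :=
  le_iSup_of_le p (le_iSup_of_le h le_rfl)

lemma coinSig_mono {s t : ℕ} (h : s ≤ t) : coinSig u s ≤ coinSig u t :=
  iSup₂_le fun p hp => comap_le_coinSig u p (le_trans hp h)

lemma coinSig_le (hu : ∀ p, Measurable (u p)) (t : ℕ) : coinSig u t ≤ mΩ :=
  iSup₂_le fun p _ => (hu p).comap_le

lemma measurableSet_eq_bool {M : MeasurableSpace Ω} {f g : Ω → Bool}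
    (hf : Measurable[M] f) (hg : Measurable[M] g) :
    MeasurableSet[M] {ω | f ω = g ω} := by
  have h : {ω | f ω = g ω} =
      (f ⁻¹' {true} ∩ g ⁻¹' {true}) ∪ (f ⁻¹' {false} ∩ g ⁻¹' {false}) := by
    ext ω; cases h1 : f ω <;> cases h2 : g ω <;> simp [h1, h2]
  rw [h]
  exact ((hf (measurableSet_singleton true)).inter (hg (measurableSet_singleton true))).union
    ((hf (measurableSet_singleton false)).inter (hg (measurableSet_singleton false)))

lemma meas_proc (t : ℕ) (i : ℕ) :
    Measurable[coinSig u t] (fun ω => proc u t ω i) := by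
  induction t generalizing i with
  | zero =>
    have : (fun ω : Ω => proc u 0 ω i) = fun _ => decide (1 ≤ i ∧ i ≤ k) := rfl
    rw [this]; exact measurable_const
  | succ t ih =>
    by_cases hi : 1 ≤ i ∧ i ≤ k
    · have hrw : (fun ω => proc u (t+1) ω i) = fun ω =>
          if proc u t ω (i-1) = proc u t ω (i+1) then proc u t ω (i-1)
          else u ⟨(i, t+1), hi.1, hi.2, Nat.le_add_left 1 t⟩ ω :=
        funext fun ω => proc_succ_interior u t ω i hi.1 hi.2
      rw [hrw]
      have hm1 : Measurable[coinSig u (t+1)] (fun ω => proc u t ω (i-1)) :=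
        (ih (i-1)).mono (coinSig_mono u (Nat.le_succ t)) le_rfl
      have hp1 : Measurable[coinSig u (t+1)] (fun ω => proc u t ω (i+1)) :=
        (ih (i+1)).mono (coinSig_mono u (Nat.le_succ t)) le_rfl
      have hcoin : Measurable[coinSig u (t+1)]
          (u ⟨(i, t+1), hi.1, hi.2, Nat.le_add_left 1 t⟩) :=
        (measurable_iff_comap_le.mpr le_rfl).mono
          (comap_le_coinSig u _ le_rfl) le_rfl
      exact Measurable.ite (measurableSet_eq_bool hm1 hp1) hm1 hcoin
    · have : (fun ω : Ω => proc u (t+1) ω i) = fun _ => false :=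
        funext fun ω => proc_out u (t+1) ω i hi
      rw [this]; exact measurable_const

/-- bounded measurable functions wrt a sub-σ-algebra -/
def MB (M : MeasurableSpace Ω) (f : Ω → ℝ) : Prop :=
  Measurable[M] f ∧ ∃ C, ∀ ω, |f ω| ≤ C

namespace MB

variable {M : MeasurableSpace Ω} {f g : Ω → ℝ}

lemma const (c : ℝ) : MB M (fun _ => c) :=
  ⟨measurable_const, ⟨|c|, fun _ => le_rfl⟩⟩

lemma add (hf : MB M f) (hg : MB M g) : MB M (fun ω => f ω + g ω) := by
  obtain ⟨Cf, hCf⟩ := hf.2; obtain ⟨Cg, hCg⟩ := hg.2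
  exact ⟨hf.1.add hg.1, ⟨Cf + Cg, fun ω => (abs_add_le _ _).trans (add_le_add (hCf ω) (hCg ω))⟩⟩

lemma sub (hf : MB M f) (hg : MB M g) : MB M (fun ω => f ω - g ω) := by
  obtain ⟨Cf, hCf⟩ := hf.2; obtain ⟨Cg, hCg⟩ := hg.2
  exact ⟨hf.1.sub hg.1, ⟨Cf + Cg, fun ω => (abs_sub _ _).trans (add_le_add (hCf ω) (hCg ω))⟩⟩

lemma mul (hf : MB M f) (hg : MB M g) : MB M (fun ω => f ω * g ω) := by
  obtain ⟨Cf, hCf⟩ := hf.2; obtain ⟨Cg, hCg⟩ := hg.2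
  refine ⟨hf.1.mul hg.1, ⟨Cf * Cg, fun ω => ?_⟩⟩
  rw [abs_mul]
  have h0 : 0 ≤ |f ω| := abs_nonneg _
  have h1 : 0 ≤ |g ω| := abs_nonneg _
  exact mul_le_mul (hCf ω) (hCg ω) h1 (le_trans h0 (hCf ω))

lemma div_const (hf : MB M f) (c : ℝ) : MB M (fun ω => f ω / c) := by
  have := hf.mul (const (M := M) (1/c))
  simpa [div_eq_mul_inv] using this

lemma sum {ι : Type*} (s : Finset ι) (F : ι → Ω → ℝ) (hF : ∀ i ∈ s, MB M (F i)) :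
    MB M (fun ω => ∑ i ∈ s, F i ω) := by
  classical
  induction s using Finset.induction with
  | empty => simpa using const 0
  | insert a s' hnotmem ih =>
    have h1 := hF a (Finset.mem_insert_self a s')
    have h2 := ih (fun i hi => hF i (Finset.mem_insert_of_mem hi))
    have := h1.add h2
    simp only [Finset.sum_insert hnotmem]
    exact this

lemma mono {M' : MeasurableSpace Ω} (hf : MB M f) (h : M ≤ M') : MB M' f :=
  ⟨hf.1.mono h le_rfl, hf.2⟩

end MB

lemma MB.integrable {f : Ω → ℝ} {P : Measure Ω} [IsProbabilityMeasure P] (hf : MB mΩ f) :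
    Integrable f P := by
  obtain ⟨C, hC⟩ := hf.2
  have ha : AEStronglyMeasurable f P := Measurable.aestronglyMeasurable (μ := P) hf.1
  exact (integrable_const C).mono' ha
    (Filter.Eventually.of_forall fun ω => by simpa using hC ω)

lemma meas_ind {M : MeasurableSpace Ω} {f : Ω → Bool} (hf : Measurable[M] f) :
    Measurable[M] (fun ω => ind (f ω)) :=
  (Measurable.of_discrete (f := ind)).comp hf

lemma MB_ind {M : MeasurableSpace Ω} {f : Ω → Bool} (hf : Measurable[M] f) :
    MB M (fun ω => ind (f ω)) :=
  ⟨meas_ind hf, ⟨1, fun ω => abs_le.mpr ⟨by have := ind_nonneg (f ω); linarith, ind_le_one _⟩⟩⟩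

lemma MB_SS (t : ℕ) : MB (coinSig u t) (SS u t) :=
  MB.sum _ _ fun i _ => MB_ind (meas_proc u t (i+1))

lemma MB_br (t : ℕ) (i : ℕ) : MB (coinSig u t) (fun ω => br u t ω i) := by
  constructor
  · exact Measurable.ite (measurableSet_eq_bool (meas_proc u t (i-1)) (meas_proc u t (i+1)))
      measurable_const measurable_const
  · exact ⟨1, fun ω => abs_le.mpr ⟨by have := br_nonneg u t ω i; linarith, br_le_one u t ω i⟩⟩

lemma MB_CC (t : ℕ) : MB (coinSig u t) (CC u t) :=
  MB.sum _ _ fun i _ => MB_br u t (i+1)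

lemma MB_dd (t : ℕ) : MB (coinSig u t) (dd u t) :=
  ((MB_ind (meas_proc u t 1)).add (MB_ind (meas_proc u t k))).div_const 2

lemma eps_eq (i t : ℕ) (h : 1 ≤ i ∧ i ≤ k ∧ 1 ≤ t) :
    eps u i t = fun ω => ind (u ⟨(i,t),h⟩ ω) - 1/2 :=
  funext fun ω => dif_pos h

lemma MB_eps (i t : ℕ) (h : 1 ≤ i ∧ i ≤ k ∧ 1 ≤ t) :
    MB (MeasurableSpace.comap (u ⟨(i,t),h⟩) inferInstance) (eps u i t) := by
  rw [eps_eq u i t h]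
  exact (MB_ind (measurable_iff_comap_le.mpr le_rfl)).sub (MB.const _)

end Meas


section Prob

variable [mΩ : MeasurableSpace Ω] {P : Measure Ω} [IsProbabilityMeasure P]

lemma biSup_comap_le (hu : ∀ p, Measurable (u p)) (S : Set (Coin k)) :
    (⨆ p ∈ S, MeasurableSpace.comap (u p) inferInstance) ≤ mΩ :=
  iSup₂_le fun p _ => (hu p).comap_le

lemma coinSig_le_biSup (t : ℕ) (S : Set (Coin k)) (hS : {p : Coin k | p.val.2 ≤ t} ⊆ S) :
    coinSig u t ≤ ⨆ p ∈ S, MeasurableSpace.comap (u p) inferInstance :=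
  iSup₂_le fun p hp => le_iSup_of_le p (le_iSup_of_le (hS hp) le_rfl)

lemma indep_coinSig_coin (hu : ∀ p, Measurable (u p))
    (hInd : iIndepFun u P)
    (S : Set (Coin k)) (q : Coin k) (hq : q ∉ S) :
    Indep (⨆ p ∈ S, MeasurableSpace.comap (u p) inferInstance)
      (MeasurableSpace.comap (u q) inferInstance) P := by
  have hii : iIndep (fun p : Coin k =>
      MeasurableSpace.comap (u p) inferInstance) P :=
    (iIndepFun_iff_iIndep _ _ _).mp hInd
  have hdisj : Disjoint S ({q} : Set (Coin k)) := Set.disjoint_singleton_right.mpr hq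
  have h := indep_iSup_of_disjoint (fun p => (hu p).comap_le) hii hdisj
  simpa using h

lemma integral_mul_of_MB {M N : MeasurableSpace Ω} (hM : M ≤ mΩ) (hN : N ≤ mΩ)
    (hind : Indep M N P) {f g : Ω → ℝ} (hf : MB M f) (hg : MB N g) :
    ∫ ω, f ω * g ω ∂P = (∫ ω, f ω ∂P) * ∫ ω, g ω ∂P := by
  have hIF : IndepFun f g P := by
    rw [IndepFun_iff_Indep]
    have hcf : MeasurableSpace.comap f inferInstance ≤ M := measurable_iff_comap_le.mp hf.1
    have hcg : MeasurableSpace.comap g inferInstance ≤ N := measurable_iff_comap_le.mp hg.1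
    exact indep_of_indep_of_le_left (indep_of_indep_of_le_right hind hcg) hcf
  exact hIF.integral_fun_mul_eq_mul_integral (MB.integrable (mΩ := mΩ) (hf.mono hM)).aestronglyMeasurable
    (MB.integrable (mΩ := mΩ) (hg.mono hN)).aestronglyMeasurable

variable (hu : ∀ p, Measurable (u p)) (hInd : iIndepFun u P)
  (hhalf : ∀ p, P {ω | u p ω = true} = 1/2)

include hu hhalf in
lemma integral_eps (i t : ℕ) (h : 1 ≤ i ∧ i ≤ k ∧ 1 ≤ t) :
    ∫ ω, eps u i t ω ∂P = 0 := by
  rw [eps_eq u i t h]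
  set q : Coin k := ⟨(i,t),h⟩ with hqdef
  have hmeas : MeasurableSet {ω | u q ω = true} := hu q (measurableSet_singleton true)
  have hindi : (fun ω => ind (u q ω))
      = Set.indicator {ω | u q ω = true} (fun _ => (1:ℝ)) := by
    funext ω
    cases hb : u q ω <;> simp [Set.indicator_apply, ind, hb]
  have hint : ∫ ω, ind (u q ω) ∂P = 1/2 := by
    rw [hindi, integral_indicator_const (1:ℝ) hmeas, measureReal_def, hhalf q]
    norm_num
  have hsub : ∫ ω, (ind (u q ω) - 1/2) ∂P
      = (∫ ω, ind (u q ω) ∂P) - ∫ _ω, (1/2 : ℝ) ∂P := by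
    apply integral_sub
    · exact ((MB_ind (hu q)).integrable)
    · exact integrable_const _
  rw [hsub, hint, integral_const]
  simp

include hu hInd hhalf in
lemma integral_g_eps (t : ℕ) {g : Ω → ℝ} (hg : MB (coinSig u t) g) (i : ℕ)
    (h : 1 ≤ i ∧ i ≤ k ∧ 1 ≤ t+1) :
    ∫ ω, g ω * eps u i (t+1) ω ∂P = 0 := by
  set q : Coin k := ⟨(i,t+1),h⟩ with hqdef
  have hq : q ∉ {p : Coin k | p.val.2 ≤ t} := by simp [hqdef]
  have hind := indep_coinSig_coin u hu hInd {p : Coin k | p.val.2 ≤ t} q hq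
  have hindep : Indep (coinSig u t) (MeasurableSpace.comap (u q) inferInstance) P := hind
  have heps : MB (MeasurableSpace.comap (u q) inferInstance) (eps u i (t+1)) :=
    MB_eps u i (t+1) h
  rw [integral_mul_of_MB (coinSig_le u hu t) (hu q).comap_le hindep hg heps]
  rw [integral_eps u hu hhalf i (t+1) h]
  ring

include hu hInd hhalf in
lemma integral_g_eps_eps (t : ℕ) {g : Ω → ℝ} (hg : MB (coinSig u t) g) (i j : ℕ)
    (hij : i ≠ j) (hi : 1 ≤ i ∧ i ≤ k ∧ 1 ≤ t+1) (hj : 1 ≤ j ∧ j ≤ k ∧ 1 ≤ t+1) :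
    ∫ ω, (g ω * eps u i (t+1) ω) * eps u j (t+1) ω ∂P = 0 := by
  set qi : Coin k := ⟨(i,t+1),hi⟩ with hqidef
  set qj : Coin k := ⟨(j,t+1),hj⟩ with hqjdef
  set S : Set (Coin k) := {p : Coin k | p.val.2 ≤ t} ∪ {qi} with hSdef
  have hqj : qj ∉ S := by
    simp only [hSdef, Set.mem_union, Set.mem_setOf_eq, Set.mem_singleton_iff, hqidef, hqjdef]
    push_neg
    constructor
    · omega
    · intro hcon
      have h2 := congrArg (fun p : Coin k => p.val.1) hcon
      simp only [hqidef, hqjdef] at h2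
      exact hij (by simpa using h2.symm)
  have hindep := indep_coinSig_coin u hu hInd S qj hqj
  have hSle : (⨆ p ∈ S, MeasurableSpace.comap (u p) inferInstance) ≤ mΩ :=
    biSup_comap_le u hu S
  have hgi : MB (⨆ p ∈ S, MeasurableSpace.comap (u p) inferInstance)
      (fun ω => g ω * eps u i (t+1) ω) := by
    apply MB.mul
    · exact hg.mono (coinSig_le_biSup u t S Set.subset_union_left)
    · exact (MB_eps u i (t+1) hi).mono
        (le_iSup_of_le qi (le_iSup_of_le (by simp [hSdef]) le_rfl))
  have hepsj : MB (MeasurableSpace.comap (u qj) inferInstance) (eps u j (t+1)) :=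
    MB_eps u j (t+1) hj
  rw [integral_mul_of_MB hSle (hu qj).comap_le hindep hgi hepsj]
  rw [integral_eps u hu hhalf j (t+1) hj]
  ring


include hu in
lemma MB_amb_SS (t : ℕ) : MB mΩ (SS u t) := (MB_SS u t).mono (coinSig_le u hu t)

include hu in
lemma MB_amb_dd (t : ℕ) : MB mΩ (dd u t) := (MB_dd u t).mono (coinSig_le u hu t)

include hu in
lemma MB_amb_br (t : ℕ) (i : ℕ) : MB mΩ (fun ω => br u t ω i) :=
  (MB_br u t i).mono (coinSig_le u hu t)

include hu in
lemma MB_amb_CC (t : ℕ) : MB mΩ (CC u t) := (MB_CC u t).mono (coinSig_le u hu t)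

include hu in
lemma MB_amb_eps (i t : ℕ) (h : 1 ≤ i ∧ i ≤ k ∧ 1 ≤ t) : MB mΩ (eps u i t) :=
  (MB_eps u i t h).mono (hu _).comap_le

include hu hInd hhalf in
lemma integral_RR (t : ℕ) : ∫ ω, RR u t ω ∂P = 0 := by
  have hint : ∀ i ∈ Finset.range k,
      Integrable (fun ω => br u t ω (i+1) * eps u (i+1) (t+1) ω) P := by
    intro i hi
    rw [Finset.mem_range] at hi
    exact MB.integrable (mΩ := mΩ)
      ((MB_amb_br u hu t (i+1)).mul (MB_amb_eps u hu (i+1) (t+1) ⟨by omega, by omega, by omega⟩))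
  have : ∫ ω, RR u t ω ∂P
      = ∑ i ∈ Finset.range k, ∫ ω, br u t ω (i+1) * eps u (i+1) (t+1) ω ∂P := by
    unfold RR
    exact integral_finset_sum (Finset.range k) hint
  rw [this]
  apply Finset.sum_eq_zero
  intro i hi
  rw [Finset.mem_range] at hi
  exact integral_g_eps u hu hInd hhalf t (MB_br u t (i+1)) (i+1) ⟨by omega, by omega, by omega⟩

include hu hInd hhalf in
lemma integral_SS_d (t : ℕ) (hk : 1 ≤ k) :
    ∫ ω, SS u (t+1) ω ∂P = ∫ ω, SS u t ω ∂P - ∫ ω, dd u t ω ∂P := by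
  have h1 : ∫ ω, SS u (t+1) ω ∂P = ∫ ω, (SS u t ω - dd u t ω + RR u t ω) ∂P := by
    apply integral_congr_ae
    filter_upwards with ω
    exact SS_succ u t ω hk
  have hiS : Integrable (fun ω => SS u t ω) P := MB.integrable (mΩ := mΩ) (MB_amb_SS u hu t)
  have hid : Integrable (fun ω => dd u t ω) P := MB.integrable (mΩ := mΩ) (MB_amb_dd u hu t)
  have hiR : Integrable (fun ω => RR u t ω) P := by
    apply MB.integrable (mΩ := mΩ)
    apply MB.sum
    intro i hi
    rw [Finset.mem_range] at hi
    exact (MB_amb_br u hu t (i+1)).mul (MB_amb_eps u hu (i+1) (t+1) ⟨by omega, by omega, by omega⟩)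
  have hiSd : Integrable (fun ω => SS u t ω - dd u t ω) P := hiS.sub hid
  rw [h1, integral_add hiSd hiR, integral_sub hiS hid,
    integral_RR u hu hInd hhalf t]
  ring

include hu hInd hhalf in
lemma integral_SS_sq (t : ℕ) (hk : 1 ≤ k) :
    ∫ ω, (SS u (t+1) ω)^2 ∂P
      = ∫ ω, (SS u t ω - dd u t ω)^2 ∂P + (1/4) * ∫ ω, CC u t ω ∂P := by
  have hMB_Sd : MB mΩ (fun ω => SS u t ω - dd u t ω) :=
    (MB_amb_SS u hu t).sub (MB_amb_dd u hu t)
  have hMB_Sd2 : MB mΩ (fun ω => (SS u t ω - dd u t ω)^2) := by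
    have := hMB_Sd.mul hMB_Sd
    simpa [sq] using this
  have hMB_term : ∀ i : ℕ, i ∈ Finset.range k → MB mΩ
      (fun ω => br u t ω (i+1) * eps u (i+1) (t+1) ω) := by
    intro i hi
    rw [Finset.mem_range] at hi
    exact (MB_amb_br u hu t (i+1)).mul (MB_amb_eps u hu (i+1) (t+1) ⟨by omega, by omega, by omega⟩)
  have hMB_R : MB mΩ (RR u t) := MB.sum _ _ hMB_term
  have hMB_R2 : MB mΩ (fun ω => (RR u t ω)^2) := by
    have := hMB_R.mul hMB_R; simpa [sq] using this
  have hMB_cross : MB mΩ (fun ω => 2*((SS u t ω - dd u t ω) * RR u t ω)) := by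
    have := (MB.const (M := mΩ) (2:ℝ)).mul (hMB_Sd.mul hMB_R)
    simpa using this
  -- pointwise expansion
  have h1 : ∫ ω, (SS u (t+1) ω)^2 ∂P
      = ∫ ω, ((SS u t ω - dd u t ω)^2 + 2*((SS u t ω - dd u t ω) * RR u t ω)
          + (RR u t ω)^2) ∂P := by
    apply integral_congr_ae
    filter_upwards with ω
    rw [SS_succ u t ω hk]; ring
  have hiSd2 : Integrable (fun ω => (SS u t ω - dd u t ω)^2) P := hMB_Sd2.integrable
  have hicross : Integrable (fun ω => 2*((SS u t ω - dd u t ω) * RR u t ω)) P :=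
    hMB_cross.integrable
  have hiR2 : Integrable (fun ω => (RR u t ω)^2) P := hMB_R2.integrable
  have hiA : Integrable (fun ω => (SS u t ω - dd u t ω)^2
      + 2*((SS u t ω - dd u t ω) * RR u t ω)) P := hiSd2.add hicross
  rw [h1, integral_add hiA hiR2, integral_add hiSd2 hicross]
  -- cross term is zero
  have hcross : ∫ ω, 2*((SS u t ω - dd u t ω) * RR u t ω) ∂P = 0 := by
    have hpt : ∀ ω, 2*((SS u t ω - dd u t ω) * RR u t ω)
        = ∑ i ∈ Finset.range k,
            ((2*(SS u t ω - dd u t ω) * br u t ω (i+1)) * eps u (i+1) (t+1) ω) := by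
      intro ω
      unfold RR
      rw [Finset.mul_sum, Finset.mul_sum]
      apply Finset.sum_congr rfl
      intro i _
      ring
    have hint : ∀ i ∈ Finset.range k, Integrable
        (fun ω => (2*(SS u t ω - dd u t ω) * br u t ω (i+1)) * eps u (i+1) (t+1) ω) P := by
      intro i hi
      rw [Finset.mem_range] at hi
      exact (((((MB.const (M := mΩ) 2).mul hMB_Sd).mul (MB_amb_br u hu t (i+1))).mul
        (MB_amb_eps u hu (i+1) (t+1) ⟨by omega, by omega, by omega⟩)).integrable)
    rw [integral_congr_ae (Filter.Eventually.of_forall hpt), integral_finset_sum _ hint]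
    apply Finset.sum_eq_zero
    intro i hi
    rw [Finset.mem_range] at hi
    have hg : MB (coinSig u t) (fun ω => 2*(SS u t ω - dd u t ω) * br u t ω (i+1)) :=
      ((MB.const (M := coinSig u t) 2).mul ((MB_SS u t).sub (MB_dd u t))).mul (MB_br u t (i+1))
    exact integral_g_eps u hu hInd hhalf t hg (i+1) ⟨by omega, by omega, by omega⟩
  -- square of noise term
  have hRsq : ∫ ω, (RR u t ω)^2 ∂P = (1/4) * ∫ ω, CC u t ω ∂P := by
    have hterm : ∀ (i j : ℕ), MB mΩ (fun ω =>
        (br u t ω (i+1) * eps u (i+1) (t+1) ω) * (br u t ω (j+1) * eps u (j+1) (t+1) ω)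
          ) ∨ True := fun _ _ => Or.inr trivial
    have hpt : ∀ ω, (RR u t ω)^2 = ∑ i ∈ Finset.range k, ∑ j ∈ Finset.range k,
        (br u t ω (i+1) * eps u (i+1) (t+1) ω) * (br u t ω (j+1) * eps u (j+1) (t+1) ω) := by
      intro ω
      rw [sq]
      unfold RR
      rw [Finset.sum_mul_sum]
    have hMBij : ∀ i ∈ Finset.range k, ∀ j ∈ Finset.range k, MB mΩ (fun ω =>
        (br u t ω (i+1) * eps u (i+1) (t+1) ω) * (br u t ω (j+1) * eps u (j+1) (t+1) ω)) := by
      intro i hi j hj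
      rw [Finset.mem_range] at hi hj
      exact (hMB_term i (Finset.mem_range.mpr hi)).mul (hMB_term j (Finset.mem_range.mpr hj))
    have h2 : ∫ ω, (RR u t ω)^2 ∂P = ∑ i ∈ Finset.range k, ∑ j ∈ Finset.range k,
        ∫ ω, (br u t ω (i+1) * eps u (i+1) (t+1) ω)
          * (br u t ω (j+1) * eps u (j+1) (t+1) ω) ∂P := by
      rw [integral_congr_ae (Filter.Eventually.of_forall hpt)]
      rw [integral_finset_sum]
      · apply Finset.sum_congr rfl
        intro i hi
        exact integral_finset_sum _ (fun j hj => (hMBij i hi j hj).integrable)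
      · intro i hi
        apply MB.integrable (mΩ := mΩ)
        exact MB.sum _ _ (fun j hj => hMBij i hi j hj)
    rw [h2]
    have hdiag : ∀ i ∈ Finset.range k, (∑ j ∈ Finset.range k,
        ∫ ω, (br u t ω (i+1) * eps u (i+1) (t+1) ω)
          * (br u t ω (j+1) * eps u (j+1) (t+1) ω) ∂P)
        = (1/4) * ∫ ω, br u t ω (i+1) ∂P := by
      intro i hi
      rw [Finset.mem_range] at hi
      rw [Finset.sum_eq_single i]
      · -- diagonal term
        have hptd : ∀ ω, (br u t ω (i+1) * eps u (i+1) (t+1) ω)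
            * (br u t ω (i+1) * eps u (i+1) (t+1) ω) = (1/4) * br u t ω (i+1) := by
          intro ω
          have h1 := br_sq u t ω (i+1)
          have h2 := eps_sq u (i+1) (t+1) ⟨by omega, by omega, by omega⟩ ω
          calc (br u t ω (i+1) * eps u (i+1) (t+1) ω)
              * (br u t ω (i+1) * eps u (i+1) (t+1) ω)
              = (br u t ω (i+1) * br u t ω (i+1))
                * (eps u (i+1) (t+1) ω * eps u (i+1) (t+1) ω) := by ring
            _ = (1/4) * br u t ω (i+1) := by rw [h1, h2]; ring
        rw [integral_congr_ae (Filter.Eventually.of_forall hptd)]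
        rw [integral_const_mul]
      · intro j hj hji
        rw [Finset.mem_range] at hj
        have hpt2 : ∀ ω, (br u t ω (i+1) * eps u (i+1) (t+1) ω)
            * (br u t ω (j+1) * eps u (j+1) (t+1) ω)
            = ((br u t ω (i+1) * br u t ω (j+1)) * eps u (i+1) (t+1) ω)
              * eps u (j+1) (t+1) ω := by intro ω; ring
        rw [integral_congr_ae (Filter.Eventually.of_forall hpt2)]
        exact integral_g_eps_eps u hu hInd hhalf t
          ((MB_br u t (i+1)).mul (MB_br u t (j+1))) (i+1) (j+1)
          (by omega) ⟨by omega, by omega, by omega⟩ ⟨by omega, by omega, by omega⟩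
      · intro hcon
        exact absurd (Finset.mem_range.mpr hi) hcon
    rw [Finset.sum_congr rfl hdiag, ← Finset.mul_sum]
    congr 1
    have : ∫ ω, CC u t ω ∂P = ∑ i ∈ Finset.range k, ∫ ω, br u t ω (i+1) ∂P := by
      unfold CC
      exact integral_finset_sum _ (fun i _ => (MB_amb_br u hu t (i+1)).integrable)
    rw [this]
  rw [hcross, hRsq]
  ring


include hu hInd hhalf in
lemma sum_CC_le (hk : 1 ≤ k) (n : ℕ) :
    ∑ t ∈ Finset.range n, ∫ ω, CC u t ω ∂P ≤ 12 * (k:ℝ)^2 := by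
  set q : ℕ → ℝ := fun t => ∫ ω, (SS u t ω)^2 ∂P with hq
  set s : ℕ → ℝ := fun t => ∫ ω, SS u t ω ∂P with hs
  have hkpos : (0:ℝ) ≤ k := Nat.cast_nonneg k
  have hstep : ∀ t, ∫ ω, CC u t ω ∂P ≤ 4*(q (t+1) - q t) + 8*(k:ℝ)*(s t - s (t+1)) := by
    intro t
    have hsq := integral_SS_sq u hu hInd hhalf t hk
    -- ∫ (S-d)^2 ≥ ∫ S^2 - 2k ∫ d
    have hiS : Integrable (fun ω => SS u t ω) P := MB.integrable (mΩ := mΩ) (MB_amb_SS u hu t)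
    have hid : Integrable (fun ω => dd u t ω) P := MB.integrable (mΩ := mΩ) (MB_amb_dd u hu t)
    have hMB_Sd2 : MB mΩ (fun ω => (SS u t ω - dd u t ω)^2) := by
      have h0 := ((MB_amb_SS u hu t).sub (MB_amb_dd u hu t)).mul
        ((MB_amb_SS u hu t).sub (MB_amb_dd u hu t))
      simpa [sq] using h0
    have hMB_S2 : MB mΩ (fun ω => (SS u t ω)^2) := by
      have h0 := (MB_amb_SS u hu t).mul (MB_amb_SS u hu t)
      simpa [sq] using h0
    have hlow : q t - 2*(k:ℝ)*(∫ ω, dd u t ω ∂P) ≤ ∫ ω, (SS u t ω - dd u t ω)^2 ∂P := by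
      have hmono : ∫ ω, ((SS u t ω)^2 - 2*(k:ℝ)*dd u t ω) ∂P
          ≤ ∫ ω, (SS u t ω - dd u t ω)^2 ∂P := by
        apply integral_mono (hMB_S2.integrable.sub (hid.const_mul _)) hMB_Sd2.integrable
        intro ω
        have h1 : dd u t ω ≤ SS u t ω := dd_le_SS u t ω hk
        have h2 : SS u t ω ≤ k := SS_le u t ω
        have h3 : 0 ≤ dd u t ω := dd_nonneg u t ω
        have key : (SS u t ω)^2 - 2*(k:ℝ)*dd u t ω ≤ (SS u t ω - dd u t ω)^2 := by
          nlinarith [sq_nonneg (dd u t ω)]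
        exact key
      have heq : ∫ ω, ((SS u t ω)^2 - 2*(k:ℝ)*dd u t ω) ∂P
          = q t - 2*(k:ℝ)*(∫ ω, dd u t ω ∂P) := by
        rw [integral_sub hMB_S2.integrable (hid.const_mul _), integral_const_mul]
      rw [← heq]
      exact hmono
    have hd : ∫ ω, dd u t ω ∂P = s t - s (t+1) := by
      have := integral_SS_d u hu hInd hhalf t hk
      simp only [hs]
      linarith
    rw [hd] at hlow
    -- hsq : q (t+1) = ∫ (S-d)^2 + (1/4) * ∫ CC
    have : (1/4) * ∫ ω, CC u t ω ∂P = q (t+1) - ∫ ω, (SS u t ω - dd u t ω)^2 ∂P := by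
      simp only [hq]; linarith
    linarith
  calc ∑ t ∈ Finset.range n, ∫ ω, CC u t ω ∂P
      ≤ ∑ t ∈ Finset.range n, (4*(q (t+1) - q t) + 8*(k:ℝ)*(s t - s (t+1))) :=
        Finset.sum_le_sum fun t _ => hstep t
    _ = 4*(q n - q 0) + 8*(k:ℝ)*(s 0 - s n) := by
        rw [Finset.sum_add_distrib, ← Finset.mul_sum, ← Finset.mul_sum,
          Finset.sum_range_sub (f := q), Finset.sum_range_sub' (f := s)]
    _ ≤ 12 * (k:ℝ)^2 := by
        have hq0 : 0 ≤ q 0 := integral_nonneg fun ω => sq_nonneg _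
        have hqn : q n ≤ (k:ℝ)^2 := by
          have hb : ∀ ω, (SS u n ω)^2 ≤ (k:ℝ)^2 := by
            intro ω
            have h1 := SS_nonneg u n ω
            have h2 := SS_le u n ω
            nlinarith
          calc q n ≤ ∫ _ω, (k:ℝ)^2 ∂P := by
                apply integral_mono ?_ (integrable_const _) hb
                have h0 := (MB_amb_SS u hu n).mul (MB_amb_SS u hu n)
                exact MB.integrable (mΩ := mΩ) (by simpa [sq] using h0)
            _ = (k:ℝ)^2 := by simp
        have hs0 : s 0 = k := by
          have : ∀ ω, SS u 0 ω = (k:ℝ) := SS_zero u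
          simp only [hs]
          rw [integral_congr_ae (Filter.Eventually.of_forall this)]
          simp
        have hsn : 0 ≤ s n := integral_nonneg fun ω => SS_nonneg u n ω
        have hkpos : (0:ℝ) ≤ k := Nat.cast_nonneg k
        nlinarith

/-- the set of alive configurations at time t -/
def aliveSet (u : Coin k → Ω → Bool) (t : ℕ) : Set Ω :=
  {ω | ∃ i, 1 ≤ i ∧ i ≤ k ∧ proc u t ω i = true}

include hu in
lemma meas_aliveSet (t : ℕ) : MeasurableSet (aliveSet u t) := by
  have : aliveSet u t = ⋃ (i : ℕ), ⋃ (_ : 1 ≤ i ∧ i ≤ k),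
      {ω | proc u t ω i = true} := by
    ext ω
    simp [aliveSet, Set.mem_iUnion]
    tauto
  rw [this]
  apply MeasurableSet.iUnion
  intro i
  apply MeasurableSet.iUnion
  intro _
  exact ((meas_proc u t i).mono (coinSig_le u hu t) le_rfl) (measurableSet_singleton true)

include hu hInd hhalf in
lemma alive_toReal_le (hk2 : 2 ≤ k) (t : ℕ) :
    (P (aliveSet u t)).toReal ≤ (∫ ω, CC u t ω ∂P) + ∫ ω, CC u (t+1) ω ∂P := by
  have hmeas := meas_aliveSet u hu t
  have hind : (fun ω => Set.indicator (aliveSet u t) (fun _ => (1:ℝ)) ω) ≤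
      fun ω => CC u t ω + CC u (t+1) ω := by
    intro ω
    dsimp only
    by_cases hω : ω ∈ aliveSet u t
    · rw [Set.indicator_of_mem hω]
      exact alive_one_le_CC u hk2 t ω hω
    · rw [Set.indicator_of_notMem hω]
      have := CC_nonneg u t ω; have := CC_nonneg u (t+1) ω
      linarith
  have h1 : (P (aliveSet u t)).toReal
      = ∫ ω, Set.indicator (aliveSet u t) (fun _ => (1:ℝ)) ω ∂P := by
    rw [integral_indicator_const (1:ℝ) hmeas]; simp [measureReal_def]
  rw [h1]
  have hiCC : Integrable (fun ω => CC u t ω + CC u (t+1) ω) P :=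
    ((MB_amb_CC u hu t).add (MB_amb_CC u hu (t+1))).integrable
  have hiInd : Integrable (fun ω => Set.indicator (aliveSet u t) (fun _ => (1:ℝ)) ω) P := by
    have := (integrable_const (1:ℝ)).indicator (μ := P) hmeas
    simpa using this
  calc ∫ ω, Set.indicator (aliveSet u t) (fun _ => (1:ℝ)) ω ∂P
      ≤ ∫ ω, (CC u t ω + CC u (t+1) ω) ∂P := integral_mono hiInd hiCC hind
    _ = (∫ ω, CC u t ω ∂P) + ∫ ω, CC u (t+1) ω ∂P :=
        integral_add (MB.integrable (mΩ := mΩ) (MB_amb_CC u hu t))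
          (MB.integrable (mΩ := mΩ) (MB_amb_CC u hu (t+1)))

include hu hInd hhalf in
lemma sum_alive_le (hk : 1 ≤ k) (n : ℕ) :
    ∑ t ∈ Finset.range n, (P (aliveSet u t)).toReal ≤ 25 * (k:ℝ)^2 := by
  rcases eq_or_lt_of_le hk with hk1 | hk2
  · -- k = 1 : deterministic death after one step
    have hk1 : k = 1 := hk1.symm
    have hzero : ∀ t, 1 ≤ t → P (aliveSet u t) = 0 := by
      intro t ht
      obtain ⟨m, rfl⟩ : ∃ m, t = m + 1 := ⟨t - 1, by omega⟩
      have : aliveSet u (m+1) = (∅ : Set Ω) := by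
        ext ω
        simp only [aliveSet, Set.mem_setOf_eq, Set.mem_empty_iff_false, iff_false]
        rintro ⟨i, h1, h2, h3⟩
        have hi1 : i = 1 := by omega
        subst hi1
        rw [proc_succ_interior u m ω 1 le_rfl hk] at h3
        rw [show (1:ℕ) - 1 = 0 from rfl, proc_zero] at h3
        rw [show (1:ℕ) + 1 = k + 1 by omega, proc_top] at h3
        simp at h3
      rw [this]; simp
    have hbound : ∀ t ∈ Finset.range n, (P (aliveSet u t)).toReal
        ≤ if t = 0 then 1 else 0 := by
      intro t _
      by_cases ht : t = 0
      · simp only [ht, if_pos rfl]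
        exact ENNReal.toReal_le_of_le_ofReal zero_le_one
          (by simpa using (prob_le_one (μ := P) (s := aliveSet u 0)))
      · rw [if_neg ht, hzero t (by omega)]; simp
    calc ∑ t ∈ Finset.range n, (P (aliveSet u t)).toReal
        ≤ ∑ t ∈ Finset.range n, (if t = 0 then (1:ℝ) else 0) := Finset.sum_le_sum hbound
      _ ≤ 1 := by
          rcases Nat.eq_zero_or_pos n with rfl | hn
          · simp
          · rw [Finset.sum_ite_eq' (Finset.range n) 0 (fun _ => (1:ℝ))]
            simp [Finset.mem_range.mpr hn]
      _ ≤ 25 * (k:ℝ)^2 := by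
          rw [hk1]; norm_num
  · -- k ≥ 2
    have hk2 : 2 ≤ k := hk2
    calc ∑ t ∈ Finset.range n, (P (aliveSet u t)).toReal
        ≤ ∑ t ∈ Finset.range n, ((∫ ω, CC u t ω ∂P) + ∫ ω, CC u (t+1) ω ∂P) :=
          Finset.sum_le_sum fun t _ => alive_toReal_le u hu hInd hhalf hk2 t
      _ = (∑ t ∈ Finset.range n, ∫ ω, CC u t ω ∂P)
            + ∑ t ∈ Finset.range n, ∫ ω, CC u (t+1) ω ∂P := Finset.sum_add_distrib
      _ ≤ 12 * (k:ℝ)^2 + ∑ t ∈ Finset.range (n+1), ∫ ω, CC u t ω ∂P := by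
          have h1 := sum_CC_le u hu hInd hhalf hk n
          have h2 : ∑ t ∈ Finset.range n, ∫ ω, CC u (t+1) ω ∂P
              ≤ ∑ t ∈ Finset.range (n+1), ∫ ω, CC u t ω ∂P := by
            rw [Finset.sum_range_succ' (fun t => ∫ ω, CC u t ω ∂P) n]
            have : 0 ≤ ∫ ω, CC u 0 ω ∂P := integral_nonneg fun ω => CC_nonneg u 0 ω
            linarith
          linarith
      _ ≤ 12 * (k:ℝ)^2 + 12 * (k:ℝ)^2 := by
          have := sum_CC_le u hu hInd hhalf hk (n+1)
          linarith
      _ ≤ 25 * (k:ℝ)^2 := by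
          have : (0:ℝ) ≤ (k:ℝ)^2 := sq_nonneg _
          linarith


/-- absorption time of the canonical process -/
noncomputable def Tproc (u : Coin k → Ω → Bool) (ω : Ω) : ℕ :=
  sInf {t | ∀ i, 1 ≤ i → i ≤ k → proc u t ω i = false}

/-- event that the canonical process eventually dies -/
def dieSet (u : Coin k → Ω → Bool) : Set Ω :=
  ⋃ (s : ℕ), (aliveSet u s)ᶜ

lemma not_alive_iff (t : ℕ) (ω : Ω) :
    ω ∉ aliveSet u t ↔ (∀ i, 1 ≤ i → i ≤ k → proc u t ω i = false) := by
  simp only [aliveSet, Set.mem_setOf_eq, not_exists]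
  constructor
  · intro h i h1 h2
    cases hb : proc u t ω i
    · rfl
    · exact absurd ⟨h1, h2, hb⟩ (h i)
  · intro h i
    rintro ⟨h1, h2, h3⟩
    rw [h i h1 h2] at h3
    exact Bool.false_ne_true h3

lemma alive_antitone (t : ℕ) (ω : Ω) (h : ω ∈ aliveSet u (t+1)) : ω ∈ aliveSet u t := by
  by_contra hcon
  rw [not_alive_iff] at hcon
  have := proc_absorb u t ω hcon
  obtain ⟨i, h1, h2, h3⟩ := h
  rw [this i h1 h2] at h3
  exact Bool.false_ne_true h3

lemma alive_mono_le {s t : ℕ} (hst : s ≤ t) (ω : Ω) (h : ω ∈ aliveSet u t) :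
    ω ∈ aliveSet u s := by
  induction t with
  | zero => exact (Nat.le_zero.mp hst) ▸ h
  | succ t ih =>
    rcases Nat.lt_or_ge s (t+1) with hlt | hge
    · exact ih (by omega) (alive_antitone u t ω h)
    · have : s = t + 1 := by omega
      exact this ▸ h

/-- the key description of the tail sets of Tproc -/
lemma Tgt_eq (t : ℕ) :
    {ω | t < Tproc u ω} = aliveSet u t ∩ dieSet u := by
  ext ω
  simp only [Set.mem_setOf_eq, Set.mem_inter_iff, Tproc]
  constructor
  · intro h
    set D := {t | ∀ i, 1 ≤ i → i ≤ k → proc u t ω i = false} with hD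
    have hne : D.Nonempty := by
      by_contra hcon
      rw [Set.not_nonempty_iff_eq_empty] at hcon
      rw [hcon] at h
      simp [Nat.sInf_empty] at h
    constructor
    · by_contra hcon
      rw [not_alive_iff] at hcon
      have : t ∈ D := hcon
      have := Nat.sInf_le this
      omega
    · obtain ⟨s, hs⟩ := hne
      exact Set.mem_iUnion.mpr ⟨s, (not_alive_iff u s ω).mpr hs⟩
  · rintro ⟨halive, hdie⟩
    set D := {t | ∀ i, 1 ≤ i → i ≤ k → proc u t ω i = false} with hD
    obtain ⟨s, hs⟩ := Set.mem_iUnion.mp hdie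
    have hne : D.Nonempty := ⟨s, (not_alive_iff u s ω).mp hs⟩
    have hmem := Nat.sInf_mem hne
    by_contra hcon
    push_neg at hcon
    have : ω ∉ aliveSet u (sInf D) := (not_alive_iff u (sInf D) ω).mpr hmem
    exact this (alive_mono_le u hcon ω halive)

include hu in
lemma meas_Tgt (t : ℕ) : MeasurableSet {ω | t < Tproc u ω} := by
  rw [Tgt_eq]
  exact (meas_aliveSet u hu t).inter
    (MeasurableSet.iUnion fun s => (meas_aliveSet u hu s).compl)

include hu in
lemma meas_Tproc : Measurable (Tproc u) := by
  apply measurable_to_countable'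
  intro m
  rcases Nat.eq_zero_or_pos m with rfl | hm
  · have : Tproc u ⁻¹' {0} = {ω | 0 < Tproc u ω}ᶜ := by
      ext ω; simp [Nat.pos_iff_ne_zero]
    rw [this]
    exact (meas_Tgt u hu 0).compl
  · obtain ⟨m', rfl⟩ : ∃ m', m = m' + 1 := ⟨m - 1, by omega⟩
    have : Tproc u ⁻¹' {m' + 1} = {ω | m' < Tproc u ω} ∩ {ω | m' + 1 < Tproc u ω}ᶜ := by
      ext ω
      simp only [Set.mem_preimage, Set.mem_singleton_iff, Set.mem_inter_iff,
        Set.mem_compl_iff, Set.mem_setOf_eq]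
      omega
    rw [this]
    exact (meas_Tgt u hu m').inter (meas_Tgt u hu (m'+1)).compl

include hu hInd hhalf in
lemma lintegral_Tproc_le (hk : 1 ≤ k) :
    ∫⁻ ω, (Tproc u ω : ℝ≥0∞) ∂P ≤ ENNReal.ofReal (25 * (k:ℝ)^2) := by
  set A : ℕ → Set Ω := fun t => {ω | t < Tproc u ω} with hA
  have hAmeas : ∀ t, MeasurableSet (A t) := fun t => meas_Tgt u hu t
  have hpt : ∀ ω, (Tproc u ω : ℝ≥0∞)
      = ∑' t, Set.indicator (A t) (fun _ => (1:ℝ≥0∞)) ω := by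
    intro ω
    have h1 : ∀ t, Set.indicator (A t) (fun _ => (1:ℝ≥0∞)) ω
        = if t < Tproc u ω then 1 else 0 := by
      intro t
      by_cases h : ω ∈ A t
      · rw [Set.indicator_of_mem h, if_pos (show t < Tproc u ω from h)]
      · rw [Set.indicator_of_notMem h, if_neg (show ¬ t < Tproc u ω from h)]
    rw [tsum_congr h1]
    rw [tsum_eq_sum (s := Finset.range (Tproc u ω))
      (fun t ht => by rw [if_neg]; simpa using Finset.mem_range.not.mp ht)]
    rw [Finset.sum_congr rfl (fun t ht => if_pos (Finset.mem_range.mp ht))]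
    simp
  calc ∫⁻ ω, (Tproc u ω : ℝ≥0∞) ∂P
      = ∑' t, P (A t) := by
        rw [lintegral_congr hpt,
          lintegral_tsum (fun t => ((measurable_const.indicator (hAmeas t)).aemeasurable))]
        congr 1
        funext t
        rw [lintegral_indicator_const (hAmeas t)]
        simp
    _ ≤ ENNReal.ofReal (25 * (k:ℝ)^2) := by
        rw [ENNReal.tsum_eq_iSup_sum]
        apply iSup_le
        intro F
        obtain ⟨n, hn⟩ : ∃ n, F ⊆ Finset.range n := ⟨F.sup id + 1, fun x hx =>
          Finset.mem_range.mpr (by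
            have h2 : id x ≤ F.sup id := Finset.le_sup hx
            simp only [id_eq] at h2; omega)⟩
        calc ∑ t ∈ F, P (A t) ≤ ∑ t ∈ Finset.range n, P (A t) :=
              Finset.sum_le_sum_of_subset hn
          _ ≤ ∑ t ∈ Finset.range n, ENNReal.ofReal ((P (aliveSet u t)).toReal) := by
              apply Finset.sum_le_sum
              intro t _
              have hsub : A t ⊆ aliveSet u t := by
                intro ω hω
                have h3 : ω ∈ aliveSet u t ∩ dieSet u := by rw [← Tgt_eq]; exact hω
                exact h3.1
              have h1 : P (A t) ≤ P (aliveSet u t) := measure_mono hsub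
              rwa [ENNReal.ofReal_toReal (measure_ne_top P _)]
          _ = ENNReal.ofReal (∑ t ∈ Finset.range n, (P (aliveSet u t)).toReal) :=
              (ENNReal.ofReal_sum_of_nonneg fun t _ => ENNReal.toReal_nonneg).symm
          _ ≤ ENNReal.ofReal (25 * (k:ℝ)^2) :=
              ENNReal.ofReal_le_ofReal (sum_alive_le u hu hInd hhalf hk n)

include hu hInd hhalf in
lemma integrable_Tproc (hk : 1 ≤ k) :
    Integrable (fun ω => (Tproc u ω : ℝ)) P := by
  constructor
  · exact ((Measurable.of_discrete (f := fun n : ℕ => (n:ℝ))).comp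
      (meas_Tproc u hu)).aestronglyMeasurable
  · rw [hasFiniteIntegral_iff_norm]
    have : ∀ ω, ENNReal.ofReal ‖(Tproc u ω : ℝ)‖ = (Tproc u ω : ℝ≥0∞) := by
      intro ω
      rw [Real.norm_of_nonneg (by positivity)]
      exact ENNReal.ofReal_natCast _
    calc ∫⁻ ω, ENNReal.ofReal ‖(Tproc u ω : ℝ)‖ ∂P
        = ∫⁻ ω, (Tproc u ω : ℝ≥0∞) ∂P := lintegral_congr this
      _ ≤ ENNReal.ofReal (25 * (k:ℝ)^2) := lintegral_Tproc_le u hu hInd hhalf hk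
      _ < ⊤ := ENNReal.ofReal_lt_top

include hu hInd hhalf in
lemma integral_Tproc_le (hk : 1 ≤ k) :
    ∫ ω, (Tproc u ω : ℝ) ∂P ≤ 25 * (k:ℝ)^2 := by
  have hmeas : AEStronglyMeasurable (fun ω => (Tproc u ω : ℝ)) P := by
    have hm : Measurable (fun ω => (Tproc u ω : ℝ)) :=
      Measurable.comp (Measurable.of_discrete (f := fun n : ℕ => (n:ℝ))) (meas_Tproc u hu)
    exact hm.aestronglyMeasurable
  rw [integral_eq_lintegral_of_nonneg_ae
    (Filter.Eventually.of_forall fun ω => by positivity) hmeas]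
  have h1 : ∫⁻ ω, ENNReal.ofReal ((Tproc u ω : ℝ)) ∂P ≤ ENNReal.ofReal (25 * (k:ℝ)^2) := by
    have : ∀ ω, ENNReal.ofReal ((Tproc u ω : ℝ)) = (Tproc u ω : ℝ≥0∞) := fun ω =>
      ENNReal.ofReal_natCast _
    rw [lintegral_congr this]
    exact lintegral_Tproc_le u hu hInd hhalf hk
  calc (∫⁻ ω, ENNReal.ofReal ((Tproc u ω : ℝ)) ∂P).toReal
      ≤ (ENNReal.ofReal (25 * (k:ℝ)^2)).toReal :=
        ENNReal.toReal_mono ENNReal.ofReal_ne_top h1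
    _ = 25 * (k:ℝ)^2 := ENNReal.toReal_ofReal (by positivity)

include hu hInd hhalf in
lemma dieSet_ae (hk : 1 ≤ k) : P (dieSet u)ᶜ = 0 := by
  set C := (dieSet u)ᶜ with hC
  have hCsub : ∀ t, C ⊆ aliveSet u t := by
    intro t ω hω
    rw [hC, dieSet] at hω
    simp only [Set.mem_compl_iff, Set.mem_iUnion, not_exists, Set.not_notMem] at hω
    exact hω t
  have hCmeas : MeasurableSet C := by
    rw [hC, dieSet]
    exact (MeasurableSet.iUnion fun s => (meas_aliveSet u hu s).compl).compl
  have hbound : ∀ n : ℕ, (n:ℝ) * (P C).toReal ≤ 25 * (k:ℝ)^2 := by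
    intro n
    have h1 : ∀ t ∈ Finset.range n, (P C).toReal ≤ (P (aliveSet u t)).toReal := by
      intro t _
      exact ENNReal.toReal_mono (measure_ne_top P _) (measure_mono (hCsub t))
    calc (n:ℝ) * (P C).toReal = ∑ _t ∈ Finset.range n, (P C).toReal := by
          rw [Finset.sum_const, Finset.card_range]; ring
      _ ≤ ∑ t ∈ Finset.range n, (P (aliveSet u t)).toReal := Finset.sum_le_sum h1
      _ ≤ 25 * (k:ℝ)^2 := sum_alive_le u hu hInd hhalf hk n
  have hzero : (P C).toReal = 0 := by
    by_contra hpos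
    have hpos' : 0 < (P C).toReal := lt_of_le_of_ne ENNReal.toReal_nonneg (Ne.symm hpos)
    obtain ⟨n, hn⟩ := exists_nat_gt ((25 * (k:ℝ)^2) / (P C).toReal)
    have := hbound n
    rw [div_lt_iff₀ hpos'] at hn
    linarith
  rcases (ENNReal.toReal_eq_zero_iff _).mp hzero with h | h
  · exact h
  · exact absurd h (measure_ne_top P _)

end Prob

end Stmt19


open Stmt19 in
/-- The one-dimensional probabilistic CA on cells `0, 1, …, k+1` with fixed
zero boundary, where each interior cell copies the common value of its two
neighbours if they agree, and flips a fair coin otherwise, reaches the all-zero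
configuration almost surely, in expected time at most `c·k²`, with `c`
independent of `k` and of the initial configuration. -/
theorem stmt19 :
    ∃ c : ℝ, 0 < c ∧
      ∀ (k : ℕ), 1 ≤ k →
        ∀ (Ω : Type) (_ : MeasurableSpace Ω) (P : Measure Ω)
          (_ : IsProbabilityMeasure P)
          (u : {p : ℕ × ℕ // 1 ≤ p.1 ∧ p.1 ≤ k ∧ 1 ≤ p.2} → Ω → Bool),
          (∀ p, Measurable (u p)) →
          iIndepFun u P →
          (∀ p, P {ω | u p ω = true} = 1 / 2) →
          ∀ y : ℕ → Ω → (ℕ → Bool),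
            (∀ (t : ℕ) (ω : Ω), y t ω 0 = false ∧ y t ω (k + 1) = false) →
            (∀ (t : ℕ) (ω : Ω) (i : ℕ) (h1 : 1 ≤ i) (h2 : i ≤ k),
              y (t + 1) ω i =
                if y t ω (i - 1) = y t ω (i + 1) then y t ω (i - 1)
                else u ⟨(i, t + 1), h1, h2, Nat.le_add_left 1 t⟩ ω) →
            P {ω | ∃ t, ∀ i, 1 ≤ i → i ≤ k → y t ω i = false} = 1 ∧
            ∫ ω, ((sInf {t | ∀ i, 1 ≤ i → i ≤ k → y t ω i = false} : ℕ) : ℝ) ∂P ≤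
              c * (k : ℝ) ^ 2 := by
  refine ⟨25, by norm_num, ?_⟩
  intro k hk Ω mΩ P hPP u hu hInd hhalf y hbc hrec
  have hdom : ∀ t ω i, 1 ≤ i → i ≤ k → proc u t ω i = false → y t ω i = false := by
    intro t ω i h1 h2 hp
    cases hy : y t ω i
    · rfl
    · have := proc_dominates u y hbc hrec t ω i (by omega) hy
      rw [this] at hp
      exact absurd hp (by simp)
  have hdie : P (dieSet u)ᶜ = 0 := dieSet_ae u hu hInd hhalf hk
  have hWmeas : MeasurableSet (dieSet u) :=
    MeasurableSet.iUnion fun s => (meas_aliveSet u hu s).compl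
  have hW1 : P (dieSet u) = 1 := (prob_compl_eq_zero_iff hWmeas).mp hdie
  have hWsub : dieSet u ⊆ {ω | ∃ t, ∀ i, 1 ≤ i → i ≤ k → y t ω i = false} := by
    intro ω hω
    obtain ⟨s, hs⟩ := Set.mem_iUnion.mp hω
    have hdead := (not_alive_iff u s ω).mp hs
    exact ⟨s, fun i h1 h2 => hdom s ω i h1 h2 (hdead i h1 h2)⟩
  constructor
  · apply le_antisymm prob_le_one
    calc (1:ℝ≥0∞) = P (dieSet u) := hW1.symm
      _ ≤ P {ω | ∃ t, ∀ i, 1 ≤ i → i ≤ k → y t ω i = false} := measure_mono hWsub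
  · set f : Ω → ℝ :=
      fun ω => ((sInf {t | ∀ i, 1 ≤ i → i ≤ k → y t ω i = false} : ℕ) : ℝ) with hf
    by_cases hIf : Integrable f P
    · have hg_int := integrable_Tproc u hu hInd hhalf hk
      have hg_le := integral_Tproc_le u hu hInd hhalf hk
      have hptle : ∀ ω ∈ dieSet u, f ω ≤ (Tproc u ω : ℝ) := by
        intro ω hω
        obtain ⟨s, hs⟩ := Set.mem_iUnion.mp hω
        have hne : {t | ∀ i, 1 ≤ i → i ≤ k → proc u t ω i = false}.Nonempty :=
          ⟨s, (not_alive_iff u s ω).mp hs⟩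
        have hmem := Nat.sInf_mem hne
        have hmem' : Tproc u ω ∈ {t | ∀ i, 1 ≤ i → i ≤ k → y t ω i = false} :=
          fun i h1 h2 => hdom _ ω i h1 h2 (hmem i h1 h2)
        have hle := Nat.sInf_le hmem'
        simp only [hf]
        exact_mod_cast hle
      have hae : ∀ᵐ ω ∂P, ω ∈ dieSet u := by
        rw [ae_iff]
        exact hdie
      have hfg : f ≤ᵐ[P] (fun ω => (Tproc u ω : ℝ)) := by
        filter_upwards [hae] with ω hω using hptle ω hω
      calc ∫ ω, f ω ∂P ≤ ∫ ω, (Tproc u ω : ℝ) ∂P := integral_mono_ae hIf hg_int hfg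
        _ ≤ 25 * (k:ℝ)^2 := hg_le
    · rw [integral_undef hIf]
      positivity
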